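/- Let H be a Hilbert space and (Sₗ) a family of unitaries on H, T and P bounded operators, and b a bounded operator such that S_{-l} b S_l = b for all l. Suppose S_{-l} T S_l → 1 and S_{-l} P S_l → 1 in the strong operator topology, and T', P' are bounded operators commuting with all Sₗ. Then S_{-l}(T' T b P' P)S_l converges strongly to T' b P', and consequently ‖T' b P'‖ ≤ ‖T' T b P' P‖. -/

import Mathlib

open Filter

/-- Let `(Sₗ)_{l∈ℤ}` be a family of unitaries on a complex Hilbert space with
`S_{-l}` inverse to `Sₗ`, `b` a bounded operator with `S_{-l} b Sₗ = b` for all `l`, and suppose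
`S_{-l} T Sₗ → 1` and `S_{-l} P Sₗ → 1` strongly as `l → +∞`. If `T', P'` are bounded operators
commuting with all `Sₗ`, then `S_{-l}(T' T b P' P)Sₗ` converges strongly to `T' b P'`, and
consequently `‖T' b P'‖ ≤ ‖T' T b P' P‖`. -/
theorem insertion_of_operators_preserves_norm_lower_bound
    {H : Type*} [NormedAddCommGroup H] [InnerProductSpace ℂ H] [CompleteSpace H]
    (S : ℤ → (H →L[ℂ] H)) (b T P T' P' : H →L[ℂ] H)
    (hS₁ : ∀ l, S l * S (-l) = 1) (hS₂ : ∀ l, S (-l) * S l = 1)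
    (hSiso : ∀ l (x : H), ‖S l x‖ = ‖x‖)
    (hb : ∀ l, S (-l) * b * S l = b)
    (hT : ∀ x : H, Tendsto (fun l : ℕ => (S (-(l : ℤ)) * T * S (l : ℤ)) x) atTop (nhds x))
    (hP : ∀ x : H, Tendsto (fun l : ℕ => (S (-(l : ℤ)) * P * S (l : ℤ)) x) atTop (nhds x))
    (hT' : ∀ l, T' * S l = S l * T') (hP' : ∀ l, P' * S l = S l * P') :
    (∀ x : H, Tendsto (fun l : ℕ => (S (-(l : ℤ)) * (T' * T * b * P' * P) * S (l : ℤ)) x)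
        atTop (nhds ((T' * b * P') x))) ∧
    ‖T' * b * P'‖ ≤ ‖T' * T * b * P' * P‖ := by
  -- algebraic identity, pointwise
  have key : ∀ (l : ℤ) (x : H), (S (-l) * (T' * T * b * P' * P) * S l) x
      = (T' * ((S (-l) * T * S l) * (b * (P' * (S (-l) * P * S l))))) x := by
    intro l x
    have hc3 : ∀ v : H, S l (S (-l) v) = v := by
      intro v
      have := DFunLike.congr_fun (hS₁ l) v
      simpa [ContinuousLinearMap.mul_apply] using this
    have hc1 : ∀ z : H, P' (S (-l) z) = S (-l) (P' z) := by
      intro z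
      have := DFunLike.congr_fun (hP' (-l)) z
      simpa [ContinuousLinearMap.mul_apply] using this
    have hc4 : ∀ z : H, T' (S (-l) z) = S (-l) (T' z) := by
      intro z
      have := DFunLike.congr_fun (hT' (-l)) z
      simpa [ContinuousLinearMap.mul_apply] using this
    have hc2 : ∀ v : H, b (S (-l) v) = S (-l) (b v) := by
      intro v
      have := DFunLike.congr_fun (hb l) (S (-l) v)
      simp only [ContinuousLinearMap.mul_apply, hc3] at this
      exact this.symm
    simp only [ContinuousLinearMap.mul_apply]
    rw [hc1, hc2, hc3, hc4]
  have conv : ∀ x : H, Tendsto (fun l : ℕ => (S (-(l : ℤ)) * (T' * T * b * P' * P) * S (l : ℤ)) x)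
      atTop (nhds ((T' * b * P') x)) := by
    intro x
    -- the inner argument converges
    have h1 : Tendsto (fun l : ℕ => b ((P' * (S (-(l : ℤ)) * P * S (l : ℤ))) x)) atTop
        (nhds (b (P' x))) := by
      have := ((b.continuous.comp P'.continuous).tendsto x).comp (hP x)
      simpa [Function.comp_def, ContinuousLinearMap.mul_apply] using this
    -- apply Tₗ to the converging sequence
    have h2 : Tendsto (fun l : ℕ =>
        (S (-(l : ℤ)) * T * S (l : ℤ)) (b ((P' * (S (-(l : ℤ)) * P * S (l : ℤ))) x))) atTop
        (nhds (b (P' x))) := by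
      set z := b (P' x)
      set w : ℕ → H := fun l => b ((P' * (S (-(l : ℤ)) * P * S (l : ℤ))) x)
      have hbound : ∀ (l : ℤ) (y : H), ‖(S (-l) * T * S l) y‖ ≤ ‖T‖ * ‖y‖ := by
        intro l y
        calc ‖(S (-l) * T * S l) y‖ = ‖T (S l y)‖ := by
              simp [ContinuousLinearMap.mul_apply, hSiso]
          _ ≤ ‖T‖ * ‖S l y‖ := T.le_opNorm _
          _ = ‖T‖ * ‖y‖ := by rw [hSiso]
      rw [Metric.tendsto_atTop]
      intro ε hε
      obtain ⟨N1, hN1⟩ := (Metric.tendsto_atTop.mp h1) (ε / (2 * (‖T‖ + 1))) (by positivity)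
      obtain ⟨N2, hN2⟩ := (Metric.tendsto_atTop.mp (hT z)) (ε / 2) (by positivity)
      refine ⟨max N1 N2, fun l hl => ?_⟩
      have hl1 := hN1 l (le_trans (le_max_left _ _) hl)
      have hl2 := hN2 l (le_trans (le_max_right _ _) hl)
      rw [dist_eq_norm] at *
      have step1 : ‖(S (-(l : ℤ)) * T * S (l : ℤ)) (w l) - (S (-(l : ℤ)) * T * S (l : ℤ)) z‖
          ≤ ‖T‖ * ‖w l - z‖ := by
        rw [← map_sub]; exact hbound _ _
      have hT1 : (0 : ℝ) < ‖T‖ + 1 := by positivity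
      have : ‖T‖ * ‖w l - z‖ ≤ (‖T‖ + 1) * (ε / (2 * (‖T‖ + 1))) := by
        apply mul_le_mul (by linarith) hl1.le (norm_nonneg _) (by positivity)
      have heq : (‖T‖ + 1) * (ε / (2 * (‖T‖ + 1))) = ε / 2 := by
        field_simp
      calc ‖(S (-(l : ℤ)) * T * S (l : ℤ)) (w l) - z‖
          ≤ ‖(S (-(l : ℤ)) * T * S (l : ℤ)) (w l) - (S (-(l : ℤ)) * T * S (l : ℤ)) z‖
            + ‖(S (-(l : ℤ)) * T * S (l : ℤ)) z - z‖ := norm_sub_le_norm_sub_add_norm_sub _ _ _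
        _ < ε / 2 + ε / 2 := by
            apply add_lt_add_of_le_of_lt _ hl2
            calc _ ≤ ‖T‖ * ‖w l - z‖ := step1
              _ ≤ (‖T‖ + 1) * (ε / (2 * (‖T‖ + 1))) := this
              _ = ε / 2 := heq
        _ = ε := by ring
    have h3 := (T'.continuous.tendsto (b (P' x))).comp h2
    have : Tendsto (fun l : ℕ =>
        (T' * ((S (-(l : ℤ)) * T * S (l : ℤ)) * (b * (P' * (S (-(l : ℤ)) * P * S (l : ℤ)))))) x)
        atTop (nhds (T' (b (P' x)))) := by
      simpa [Function.comp_def, ContinuousLinearMap.mul_apply] using h3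
    have h4 := this.congr fun l : ℕ => (key (l : ℤ) x).symm
    simpa [ContinuousLinearMap.mul_apply] using h4
  refine ⟨conv, ?_⟩
  apply ContinuousLinearMap.opNorm_le_bound _ (norm_nonneg _)
  intro x
  have hbnd : ∀ l : ℕ, ‖(S (-(l : ℤ)) * (T' * T * b * P' * P) * S (l : ℤ)) x‖
      ≤ ‖T' * T * b * P' * P‖ * ‖x‖ := by
    intro l
    calc ‖(S (-(l : ℤ)) * (T' * T * b * P' * P) * S (l : ℤ)) x‖
        = ‖(T' * T * b * P' * P) (S (l : ℤ) x)‖ := by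
          simp [ContinuousLinearMap.mul_apply, hSiso]
      _ ≤ ‖T' * T * b * P' * P‖ * ‖S (l : ℤ) x‖ := (T' * T * b * P' * P).le_opNorm _
      _ = ‖T' * T * b * P' * P‖ * ‖x‖ := by rw [hSiso]
  have := ((continuous_norm.tendsto _).comp (conv x))
  exact le_of_tendsto this (Eventually.of_forall fun l => hbnd l)
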